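/- arXiv:1709.07023 — 3 statements merged into one kernel-verified Lean document; each statement's English description precedes it below -/
import Mathlib

section
/- Let (V_n) be a sequence of potentials V_n = V_{ν_n} − B with ν_n nonnegative 2π-periodic measures, such that the lowest Bloch eigenvalues ε^{V_n}_{q=0} are bounded in n and ν_n(Γ) → ∞. Let u_n be the normalized positive ground state at q=0 and α_n = min_Γ u_n. Then α_n ∫_Γ u_n dν_n → 0 and α_n² ν_n(Γ) → 0 as n → ∞. -/
open MeasureTheory Real Filter

lemma my_intOn (f : ℝ → ℝ) (hf : Continuous f) (μ : Measure ℝ)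
    (hμ : μ (Set.Ico (-π) π) < ⊤) : IntegrableOn f (Set.Ico (-π) π) μ := by
  obtain ⟨M, hM⟩ := isCompact_Icc.exists_bound_of_continuousOn (f := f)
    (s := Set.Icc (-π) π) hf.continuousOn
  refine Measure.integrableOn_of_bounded (M := M) hμ.ne hf.aestronglyMeasurable ?_
  filter_upwards [ae_restrict_mem measurableSet_Ico] with x hx
  exact hM x (Set.Ico_subset_Icc_self hx)

/-- If `V_n = V_{ν_n} - B`, the ground state eigenvalues `ε^{V_n}_0` are bounded and
`ν_n(Γ) → ∞`, then with `u_n` the normalized positive ground states and `α_n = min_Γ u_n`,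
one has `α_n ∫_Γ u_n dν_n → 0` and `α_n² ν_n(Γ) → 0`. -/
theorem stmt9 (ν : ℕ → Measure ℝ) (B : ℝ) (ε α : ℕ → ℝ) (u : ℕ → ℝ → ℝ)
    (hper : ∀ n, ∀ s : Set ℝ, MeasurableSet s → ν n ((fun x => x + 2 * π) '' s) = ν n s)
    (hfin : ∀ n, ν n (Set.Ico (-π) π) < ⊤)
    (huper : ∀ n, Function.Periodic (u n) (2 * π)) (hucont : ∀ n, Continuous (u n))
    (hudiff : ∀ n, Differentiable ℝ (u n)) (hdcont : ∀ n, Continuous (deriv (u n)))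
    (hupos : ∀ n x, 0 < u n x)
    (hnorm : ∀ n, ∫ x in Set.Ico (-π) π, (u n x) ^ 2 = 1)
    (hweak : ∀ n, ∀ φ : ℝ → ℝ, Differentiable ℝ φ → Function.Periodic φ (2 * π) →
      Continuous (deriv φ) →
      (∫ x in Set.Ico (-π) π, deriv (u n) x * deriv φ x)
        + (∫ x in Set.Ico (-π) π, u n x * φ x ∂(ν n))
        - B * ∫ x in Set.Ico (-π) π, u n x * φ x
        = ε n * ∫ x in Set.Ico (-π) π, u n x * φ x)
    (hα : ∀ n x, α n ≤ u n x) (hαmem : ∀ n, ∃ x, u n x = α n)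
    (hbdd : ∃ C : ℝ, ∀ n, |ε n| ≤ C)
    (hmass : Tendsto (fun n => (ν n (Set.Ico (-π) π)).toReal) atTop atTop) :
    Tendsto (fun n => α n * ∫ x in Set.Ico (-π) π, u n x ∂(ν n)) atTop (nhds 0) ∧
    Tendsto (fun n => (α n) ^ 2 * (ν n (Set.Ico (-π) π)).toReal) atTop (nhds 0) := by
  obtain ⟨C, hC⟩ := hbdd
  have hαpos : ∀ n, 0 < α n := fun n => by
    obtain ⟨x, hx⟩ := hαmem n; exact hx ▸ hupos n x
  set Γ : Set ℝ := Set.Ico (-π) π with hΓdef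
  have hvolΓ : volume Γ < ⊤ := measure_Ico_lt_top
  -- integrability facts
  have hintν : ∀ n, IntegrableOn (u n) Γ (ν n) := fun n => my_intOn _ (hucont n) _ (hfin n)
  have hintν2 : ∀ n, IntegrableOn (fun x => u n x * u n x) Γ (ν n) :=
    fun n => my_intOn _ ((hucont n).mul (hucont n)) _ (hfin n)
  have hintv : ∀ n, IntegrableOn (u n) Γ volume := fun n => my_intOn _ (hucont n) _ hvolΓ
  have hintv2 : ∀ n, IntegrableOn (fun x => u n x * u n x) Γ volume :=
    fun n => my_intOn _ ((hucont n).mul (hucont n)) _ hvolΓ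
  -- normalization in product form
  have hnorm' : ∀ n, ∫ x in Γ, u n x * u n x = 1 := fun n => by
    simpa [pow_two] using hnorm n
  -- ∫ u² dν ≤ ε + B
  have key2 : ∀ n, ∫ x in Γ, u n x * u n x ∂(ν n) ≤ ε n + B := fun n => by
    have h := hweak n (u n) (hudiff n) (huper n) (hdcont n)
    rw [hnorm' n, mul_one, mul_one] at h
    have hd : 0 ≤ ∫ x in Γ, deriv (u n) x * deriv (u n) x :=
      setIntegral_nonneg measurableSet_Ico (fun x _ => mul_self_nonneg _)
    linarith
  -- ∫ u dν = (ε + B) * ∫ u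
  have key1 : ∀ n, ∫ x in Γ, u n x ∂(ν n) = (ε n + B) * ∫ x in Γ, u n x := fun n => by
    have h := hweak n (fun _ => 1) (differentiable_const 1) (fun x => rfl)
      (by simp only [deriv_const']; exact continuous_const)
    simp only [deriv_const', mul_zero, mul_one, integral_zero, zero_add] at h
    linarith
  -- bound on ∫ u vol
  have hIu : ∀ n, ∫ x in Γ, u n x ≤ (2 * π + 1) / 2 := fun n => by
    have h1 : ∫ x in Γ, u n x ≤ ∫ x in Γ, (1 + u n x * u n x) / 2 := by
      refine setIntegral_mono_on (hintv n) ?_ measurableSet_Ico (fun x _ => ?_)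
      · exact ((integrableOn_const hvolΓ.ne).add (hintv2 n)).div_const 2
      · nlinarith [sq_nonneg (u n x - 1)]
    have h2 : ∫ x in Γ, (1 + u n x * u n x) / 2
        = ((volume Γ).toReal + 1) / 2 := by
      rw [integral_div, integral_add (integrableOn_const hvolΓ.ne : IntegrableOn (fun _ => (1:ℝ)) Γ volume) (hintv2 n),
        hnorm' n, setIntegral_const]
      simp [smul_eq_mul, Measure.real]
    have h3 : (volume Γ).toReal = 2 * π := by
      rw [hΓdef, Real.volume_Ico]
      rw [ENNReal.toReal_ofReal (by linarith [pi_pos])]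
      ring
    rw [h2, h3] at h1
    exact h1
  have hIunn : ∀ n, 0 ≤ ∫ x in Γ, u n x := fun n =>
    setIntegral_nonneg measurableSet_Ico (fun x _ => (hupos n x).le)
  -- chain: α² νΓ ≤ α ∫u dν ≤ ∫ u² dν
  have chain1 : ∀ n, α n ^ 2 * (ν n Γ).toReal ≤ α n * ∫ x in Γ, u n x ∂(ν n) := fun n => by
    rw [← integral_const_mul]
    refine setIntegral_ge_of_const_le_real measurableSet_Ico (hfin n).ne (fun x _ => ?_) ?_
    · have := hα n x
      nlinarith [hαpos n]
    · exact (hintν n).const_mul _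
  have chain2 : ∀ n, α n * ∫ x in Γ, u n x ∂(ν n) ≤ ∫ x in Γ, u n x * u n x ∂(ν n) := fun n => by
    rw [← integral_const_mul]
    refine setIntegral_mono_on ((hintν n).const_mul _) (hintν2 n) measurableSet_Ico
      (fun x _ => ?_)
    exact mul_le_mul_of_nonneg_right (hα n x) (hupos n x).le
  -- α → 0
  have hαsq : ∀ n, α n ^ 2 * (ν n Γ).toReal ≤ C + B := fun n => by
    have := (chain1 n).trans ((chain2 n).trans (key2 n))
    have hε := (abs_le.1 (hC n)).2
    linarith
  have hα0 : Tendsto α atTop (nhds 0) := by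
    have hsq : Tendsto (fun n => α n ^ 2) atTop (nhds 0) := by
      refine squeeze_zero' (Eventually.of_forall fun n => sq_nonneg _)
        ?_ (Tendsto.const_div_atTop hmass (C + B))
      filter_upwards [hmass.eventually_ge_atTop 1] with n hn
      rw [le_div_iff₀ (by linarith)]
      exact hαsq n
    have : Tendsto (fun n => Real.sqrt (α n ^ 2)) atTop (nhds (Real.sqrt 0)) :=
      (Real.continuous_sqrt.tendsto 0).comp hsq
    simpa [Real.sqrt_sq (hαpos _).le, Real.sqrt_zero] using this
  -- conclusion
  have habs : ∀ n, |α n * ∫ x in Γ, u n x ∂(ν n)| ≤ α n * ((C + |B|) * ((2 * π + 1) / 2)) :=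
    fun n => by
    rw [key1 n, abs_mul, abs_of_pos (hαpos n), abs_mul]
    refine mul_le_mul_of_nonneg_left ?_ (hαpos n).le
    refine mul_le_mul ((abs_add_le _ _).trans (by linarith [hC n, abs_abs B])) ?_
      (abs_nonneg _)
      (by have := (abs_nonneg (ε n)).trans (hC n); positivity)
    rw [abs_of_nonneg (hIunn n)]; exact hIu n
  have h1 : Tendsto (fun n => α n * ∫ x in Γ, u n x ∂(ν n)) atTop (nhds 0) := by
    refine squeeze_zero_norm habs ?_
    simpa using hα0.mul_const ((C + |B|) * ((2 * π + 1) / 2))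
  refine ⟨h1, ?_⟩
  refine tendsto_of_tendsto_of_tendsto_of_le_of_le tendsto_const_nhds h1 ?_ chain1
  exact fun n => mul_nonneg (sq_nonneg _) ENNReal.toReal_nonneg
end

section
/- Let v ∈ H^1_per with v(0) = 0, and for q ∈ ℝ define v_q(x) := v(x) e^{−iq[x]}, where [x] = x mod 2π. Then v_q ∈ H^1_per, ‖v_q‖_{L²_per} = ‖v‖_{L²_per}, and ∫_Γ |(−i d/dx + q)v_q|² = ∫_Γ |v'|². -/
open MeasureTheory Real

/-- `[x] = x mod 2π`. -/
noncomputable def modTwoPi (x : ℝ) : ℝ := x - 2 * π * ⌊x / (2 * π)⌋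

/-- The twisted function `v_q(x) = v(x) e^{-i q [x]}`. -/
noncomputable def twist (v : ℝ → ℂ) (q : ℝ) : ℝ → ℂ :=
  fun x => v x * Complex.exp (-Complex.I * q * modTwoPi x)

lemma norm_twist (v : ℝ → ℂ) (q : ℝ) (x : ℝ) : ‖twist v q x‖ = ‖v x‖ := by
  unfold twist
  rw [norm_mul]
  have : ‖Complex.exp (-Complex.I * q * modTwoPi x)‖ = 1 := by
    rw [Complex.norm_exp]
    simp
  rw [this, mul_one]

lemma floor_eventually (x : ℝ) (hx : ∀ k : ℤ, x ≠ 2 * π * k) :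
    ∀ᶠ y in nhds x, modTwoPi y = y - 2 * π * ⌊x / (2 * π)⌋ := by
  set k : ℤ := ⌊x / (2 * π)⌋
  have h2pi : (0:ℝ) < 2 * π := by positivity
  have hxmem : x ∈ Set.Ioo (2 * π * k) (2 * π * (k + 1)) := by
    constructor
    · rcases lt_or_eq_of_le (Int.floor_le (x / (2 * π))) with h | h
      · calc 2 * π * k < 2 * π * (x / (2*π)) := by
              exact (mul_lt_mul_iff_right₀ h2pi).mpr h
          _ = x := by field_simp
      · exfalso; exact hx k (by field_simp at h; linarith)
    · have := Int.lt_floor_add_one (x / (2 * π))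
      calc x = 2 * π * (x / (2*π)) := by field_simp
        _ < 2 * π * (k + 1) := by push_cast; exact (mul_lt_mul_iff_right₀ h2pi).mpr this
  filter_upwards [isOpen_Ioo.mem_nhds hxmem] with y hy
  have : ⌊y / (2 * π)⌋ = k := by
    rw [Int.floor_eq_iff]
    constructor
    · rw [le_div_iff₀ h2pi]; linarith [hy.1]
    · rw [div_lt_iff₀ h2pi]; push_cast; linarith [hy.2]
  simp [modTwoPi, this]

lemma key (v : ℝ → ℂ) (q : ℝ) (hv : Differentiable ℝ v) {x c : ℝ}
    (h : ∀ᶠ y in nhds x, modTwoPi y = y - c) :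
    ‖(-Complex.I) * deriv (twist v q) x + (q : ℂ) * twist v q x‖ = ‖deriv v x‖ := by
  have hm : modTwoPi x = x - c := h.self_of_nhds
  set e : ℂ := Complex.exp (-Complex.I * q * ((x - c : ℝ) : ℂ)) with he
  have h1 : HasDerivAt (fun y : ℝ => -Complex.I * q * (((y - c : ℝ) : ℂ))) (-Complex.I * q) x := by
    have : HasDerivAt (fun y : ℝ => (((y - c : ℝ)) : ℂ)) 1 x := by
      simpa using ((hasDerivAt_id x).sub_const c).ofReal_comp
    simpa using this.const_mul (-Complex.I * (q:ℂ))
  have h2 := h1.cexp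
  have h3 := ((hv x).hasDerivAt).mul h2
  have heq : twist v q =ᶠ[nhds x]
      fun y => v y * Complex.exp (-Complex.I * q * (((y - c : ℝ)) : ℂ)) := by
    filter_upwards [h] with y hy
    simp [twist, hy]
  have hd : deriv (twist v q) x
      = deriv v x * e + v x * (e * (-Complex.I * q)) := by
    rw [heq.deriv_eq]; exact h3.deriv
  have htw : twist v q x = v x * e := by simp [twist, hm, he]
  rw [hd, htw]
  have : (-Complex.I) * (deriv v x * e + v x * (e * (-Complex.I * q))) + q * (v x * e)
      = (-Complex.I) * deriv v x * e := by
    linear_combination (v x * e * (q:ℂ)) * Complex.I_sq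
  rw [this, norm_mul, norm_mul]
  have : ‖e‖ = 1 := by
    rw [he, Complex.norm_exp]; simp
  simp [this]

lemma not_mult {x : ℝ} (hx : x ∈ Set.Ico (-π) π) (h0 : x ≠ 0) : ∀ k : ℤ, x ≠ 2 * π * k := by
  intro k hk
  have hπ := pi_pos
  rcases lt_trichotomy k 0 with h | h | h
  · have : (k:ℝ) ≤ -1 := by exact_mod_cast Int.le_sub_one_of_lt h
    have : 2 * π * k ≤ 2 * π * (-1) := by nlinarith
    have := hx.1; nlinarith [hk ▸ this]
  · exact h0 (by simp [h] at hk; exact hk)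
  · have : (1:ℝ) ≤ k := by exact_mod_cast h
    have : 2 * π * 1 ≤ 2 * π * k := by nlinarith
    have := hx.2; nlinarith [hk ▸ this]

/-- If `v ∈ H^1_per` with `v(0) = 0`, then `v_q(x) = v(x) e^{-iq[x]}` lies in `H^1_per`
(it is continuous and `2π`-periodic), has the same `L²_per` norm as `v`, and
`∫_Γ |(-i d/dx + q) v_q|² = ∫_Γ |v'|²`. -/
theorem stmt10 (v : ℝ → ℂ) (q : ℝ)
    (hv : Differentiable ℝ v) (hvper : Function.Periodic v (2 * π)) (hv0 : v 0 = 0) :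
    Continuous (twist v q) ∧ Function.Periodic (twist v q) (2 * π) ∧
    (∫ x in Set.Ico (-π) π, ‖twist v q x‖ ^ 2) = (∫ x in Set.Ico (-π) π, ‖v x‖ ^ 2) ∧
    (∫ x in Set.Ico (-π) π, ‖(-Complex.I) * deriv (twist v q) x + (q : ℂ) * twist v q x‖ ^ 2)
      = ∫ x in Set.Ico (-π) π, ‖deriv v x‖ ^ 2 := by

  have h2pi : (0:ℝ) < 2 * π := by positivity
  have hmodper : ∀ x : ℝ, modTwoPi (x + 2 * π) = modTwoPi x := by
    intro x
    unfold modTwoPi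
    have : (x + 2 * π) / (2 * π) = x / (2 * π) + 1 := by field_simp
    rw [this, Int.floor_add_one]
    push_cast
    ring
  refine ⟨?_, ?_, ?_, ?_⟩
  · -- continuity
    rw [continuous_iff_continuousAt]
    intro x
    by_cases hx : ∀ k : ℤ, x ≠ 2 * π * k
    · have hev := floor_eventually x hx
      have : ContinuousAt (fun y => v y * Complex.exp (-Complex.I * q * (((y - 2 * π * ⌊x / (2*π)⌋ : ℝ)) : ℂ))) x := by
        apply ContinuousAt.mul (hv.continuous.continuousAt)
        apply ContinuousAt.cexp
        fun_prop
      apply this.congr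
      filter_upwards [hev] with y hy
      simp [twist, hy]
    · push_neg at hx
      obtain ⟨k, hk⟩ := hx
      have hvx : v x = 0 := by
        have := hvper.int_mul_eq k
        rw [hk]
        rw [show 2 * π * (k:ℝ) = (k:ℝ) * (2 * π) by ring, this, hv0]
      have htx : twist v q x = 0 := by simp [twist, hvx]
      rw [ContinuousAt, htx]
      have hg : Filter.Tendsto (fun y => ‖v y‖) (nhds x) (nhds 0) := by
        have hvt : Filter.Tendsto v (nhds x) (nhds 0) := hvx ▸ hv.continuous.continuousAt
        simpa using hvt.norm
      exact squeeze_zero_norm (fun y => le_of_eq (norm_twist v q y)) hg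
  · -- periodicity
    intro x
    simp [twist, hmodper x, hvper x]
  · -- L2 norms
    congr 1
    ext x
    rw [norm_twist]
  · -- energy
    apply setIntegral_congr_ae measurableSet_Ico
    have h0 : ∀ᵐ (x : ℝ), x ≠ 0 := by
      rw [ae_iff]
      have : {x : ℝ | ¬ x ≠ 0} = {0} := by ext x; simp
      rw [this]
      exact Real.volume_singleton
    filter_upwards [h0] with x hx0 hmem
    have hx := not_mult hmem hx0
    rw [key v q hv (by simpa using floor_eventually x hx)]
end

section
/- Let A be a self-adjoint operator on a finite-dimensional inner product space, let ε^N be a real number with ε^N ∉ σ(A), let u be a unit vector with ⟨u, A u⟩ = ε^N, and let ε ∈ ℝ. Define the residual r := (A − ε^N)u. Then ε^N − ε = ⟨r, (A − ε^N)^{−1}(A − ε)(A − ε^N)^{−1} r⟩. -/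
open RealInnerProductSpace

/-- Residual identity: for `A` self-adjoint on a finite-dimensional inner product space,
`ε^N ∉ σ(A)`, `u` a unit vector with `⟨u, Au⟩ = ε^N`, and `r = (A - ε^N)u`,
`ε^N - ε = ⟨r, (A - ε^N)⁻¹ (A - ε) (A - ε^N)⁻¹ r⟩`. -/
theorem stmt13 {E : Type*} [NormedAddCommGroup E] [InnerProductSpace ℝ E]
    [FiniteDimensional ℝ E]
    (A : Module.End ℝ E) (hA : A.IsSymmetric)
    (εN ε : ℝ) (hεN : εN ∉ spectrum ℝ A)
    (u : E) (hu : ‖u‖ = 1) (huA : ⟪u, A u⟫ = εN)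
    (r : E) (hr : r = A u - εN • u) :
    εN - ε =
      ⟪r, (Ring.inverse (A - εN • (1 : Module.End ℝ E)))
        ((A - ε • (1 : Module.End ℝ E))
          ((Ring.inverse (A - εN • (1 : Module.End ℝ E))) r))⟫ := by
  set B := A - εN • (1 : Module.End ℝ E) with hB
  have hunit : IsUnit B := by
    have h1 := spectrum.notMem_iff.mp hεN
    have h2 : IsUnit (-(algebraMap ℝ (Module.End ℝ E) εN - A)) := h1.neg
    simpa [hB, Algebra.algebraMap_eq_smul_one, neg_sub] using h2
  have hCB : Ring.inverse B * B = 1 := Ring.inverse_mul_cancel B hunit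
  have hBC : B * Ring.inverse B = 1 := Ring.mul_inverse_cancel B hunit
  set C := Ring.inverse B with hC
  have hBCx : ∀ x, B (C x) = x := by
    intro x
    have := congrArg (fun T : Module.End ℝ E => T x) hBC
    simpa [Module.End.mul_apply] using this
  have hCBx : ∀ x, C (B x) = x := by
    intro x
    have := congrArg (fun T : Module.End ℝ E => T x) hCB
    simpa [Module.End.mul_apply] using this
  have hBsym : B.IsSymmetric := by
    intro x y
    simp [hB, LinearMap.sub_apply, inner_sub_left, inner_sub_right, hA x y,
      real_inner_smul_left, real_inner_smul_right]
  have hCsym : ∀ x y, ⟪C x, y⟫ = ⟪x, C y⟫ := by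
    intro x y
    calc ⟪C x, y⟫ = ⟪C x, B (C y)⟫ := by rw [hBCx]
    _ = ⟪B (C x), C y⟫ := (hBsym _ _).symm
    _ = ⟪x, C y⟫ := by rw [hBCx]
  have hCr : C r = u := by
    have : r = B u := by simp [hr, hB, LinearMap.sub_apply]
    rw [this, hCBx]
  rw [hCr, ← hCsym, hCr]
  have huu : ⟪u, u⟫ = 1 := by
    rw [real_inner_self_eq_norm_sq, hu]; ring
  simp [LinearMap.sub_apply, inner_sub_right, real_inner_smul_right, huA, huu, hu]
end
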